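/- Let T < 0 be a real number and let n ≥ 62 be an integer. Define c_q = ∫_0^∞ (1+(t−T)²)^{(5+2q−n)/2} dt for q = 0, 1, 2, and set a₀ = ((n+3)c₁ / (2(n−7)c₀)) · ( 3 + √( 9 − 8((n+7)(n−7)/((n+3)(n−9))) · c₀c₂/c₁² ) ). Then the quantity under the square root is positive, and c₀ a₀² − (2(n+3)/(n−7)) c₁ a₀ + ((n+3)(n+7)/((n−7)(n−9))) c₂ > 0. (This quantity is, up to the positive factor (n−1)(n+1)/(n−5), the value I(1) of the auxiliary function I at s = 1.) -/

import Mathlib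

open MeasureTheory Set Filter Real Topology

private lemma I1_base_pos (T t : ℝ) : 0 < 1 + (t - T) ^ 2 := by positivity

private lemma I1_cont (T e : ℝ) : Continuous fun t : ℝ => (1 + (t - T) ^ 2) ^ e := by
  apply Continuous.rpow_const (by continuity)
  intro t; exact Or.inl (ne_of_gt (I1_base_pos T t))

private lemma I1_integrableOn {T : ℝ} (hT : T < 0) {e : ℝ} (he : e ≤ -1) :
    IntegrableOn (fun t : ℝ => (1 + (t - T) ^ 2) ^ e) (Ioi (0:ℝ)) := by
  have hcont := I1_cont T e
  have h01 : IntegrableOn (fun t : ℝ => (1 + (t - T) ^ 2) ^ e) (Ioc (0:ℝ) 1) := by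
    apply Measure.integrableOn_of_bounded (M := 1) measure_Ioc_lt_top.ne
      hcont.aestronglyMeasurable
    filter_upwards with t
    rw [Real.norm_eq_abs, abs_of_nonneg (Real.rpow_nonneg (I1_base_pos T t).le _)]
    exact Real.rpow_le_one_of_one_le_of_nonpos (by nlinarith [sq_nonneg (t - T)])
      (by linarith)
  have h1 : IntegrableOn (fun t : ℝ => (1 + (t - T) ^ 2) ^ e) (Ioi (1:ℝ)) := by
    have hg : IntegrableOn (fun t : ℝ => t ^ (2 * e)) (Ioi (1:ℝ)) :=
      integrableOn_Ioi_rpow_of_lt (by linarith) one_pos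
    apply Integrable.mono' hg hcont.aestronglyMeasurable.restrict
    rw [ae_restrict_iff' measurableSet_Ioi]
    filter_upwards with t ht
    have ht1 : (1:ℝ) < t := ht
    have ht0 : (0:ℝ) < t := by linarith
    rw [Real.norm_eq_abs, abs_of_nonneg (Real.rpow_nonneg (I1_base_pos T t).le _)]
    have h2 : t ^ 2 ≤ 1 + (t - T) ^ 2 := by nlinarith [mul_pos ht0 (neg_pos.mpr hT)]
    have h3 : (1 + (t - T) ^ 2) ^ e ≤ (t ^ 2) ^ e :=
      Real.rpow_le_rpow_of_nonpos (by positivity) h2 (by linarith)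
    have h4 : (t ^ 2 : ℝ) ^ e = t ^ (2 * e) := by
      rw [Real.rpow_mul ht0.le, Real.rpow_two]
    linarith [h3, h4.le]
  have hunion := h01.union h1
  rwa [Ioc_union_Ioi_eq_Ioi (zero_le_one' ℝ)] at hunion

private lemma I1_integral_pos {T : ℝ} (hT : T < 0) {e : ℝ} (he : e ≤ -1) :
    0 < ∫ t in Ioi (0:ℝ), (1 + (t - T) ^ 2) ^ e := by
  rw [setIntegral_pos_iff_support_of_nonneg_ae _ (I1_integrableOn hT he)]
  · have hsup : Function.support (fun t : ℝ => (1 + (t - T) ^ 2) ^ e) ∩ Ioi (0:ℝ)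
        = Ioi (0:ℝ) := by
      apply inter_eq_right.mpr
      intro t _
      exact (Real.rpow_pos_of_pos (I1_base_pos T t) e).ne'
    rw [hsup, Real.volume_Ioi]
    simp
  · filter_upwards with t
    exact Real.rpow_nonneg (I1_base_pos T t).le e

private lemma I1_ibp {T : ℝ} (hT : T < 0) {r s : ℝ} (hr : 1 ≤ r) (hs : s = r + 1) :
    (2 * r - 1) * ∫ t in Ioi (0:ℝ), (1 + (t - T) ^ 2) ^ (-r)
      = 2 * r * (∫ t in Ioi (0:ℝ), (1 + (t - T) ^ 2) ^ (-s))
        + (-T) * (1 + T ^ 2) ^ (-r) := by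
  subst hs
  set f : ℝ → ℝ := fun t => (t - T) * (1 + (t - T) ^ 2) ^ (-r) with hfdef
  set F' : ℝ → ℝ := fun t =>
    (1 - 2 * r) * (1 + (t - T) ^ 2) ^ (-r) + 2 * r * (1 + (t - T) ^ 2) ^ (-(r + 1)) with hF'def
  have hderiv : ∀ x ∈ Ici (0:ℝ), HasDerivAt f (F' x) x := by
    intro x _
    have hbx : (0:ℝ) < 1 + (x - T) ^ 2 := I1_base_pos T x
    have hb : HasDerivAt (fun t : ℝ => 1 + (t - T) ^ 2) (2 * (x - T)) x := by
      have h1 : HasDerivAt (fun t : ℝ => t - T) 1 x := (hasDerivAt_id x).sub_const T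
      have h2 := (h1.pow 2).const_add 1
      simpa using h2
    have hrp := hb.rpow_const (p := -r) (Or.inl hbx.ne')
    have hmul := ((hasDerivAt_id x).sub_const T).mul hrp
    simp only [id_eq] at hmul
    have hsplit : (1 + (x - T) ^ 2) ^ (-r)
        = (1 + (x - T) ^ 2) ^ (-r - 1) * (1 + (x - T) ^ 2) := by
      have h := Real.rpow_add_one hbx.ne' (-r - 1)
      rw [show (-r - 1 + 1 : ℝ) = -r by ring] at h
      exact h
    have hsplit2 : (1 + (x - T) ^ 2) ^ (-(r + 1)) = (1 + (x - T) ^ 2) ^ (-r - 1) := by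
      rw [show (-(r + 1) : ℝ) = -r - 1 by ring]
    refine hmul.congr_deriv ?_
    simp only [hF'def]
    rw [hsplit2, hsplit]
    ring
  have htend : Tendsto f atTop (𝓝 0) := by
    have hg : Tendsto (fun t : ℝ => (t - T) ^ (1 - 2 * r)) atTop (𝓝 0) := by
      have h1 : Tendsto (fun t : ℝ => t - T) atTop atTop :=
        tendsto_atTop_add_const_right atTop (-T) tendsto_id
      have h2 := (tendsto_rpow_neg_atTop (by linarith : (0:ℝ) < 2 * r - 1)).comp h1
      simpa [Function.comp_def, show -(2 * r - 1) = 1 - 2 * r by ring] using h2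
    apply squeeze_zero' _ _ hg
    · filter_upwards [eventually_ge_atTop (0:ℝ)] with t ht
      have : 0 ≤ t - T := by linarith
      exact mul_nonneg this (Real.rpow_nonneg (I1_base_pos T t).le _)
    · filter_upwards [eventually_ge_atTop (1:ℝ)] with t ht
      have htT : 0 < t - T := by linarith
      have h2 : (t - T) ^ 2 ≤ 1 + (t - T) ^ 2 := by linarith
      have h3 : (1 + (t - T) ^ 2) ^ (-r) ≤ ((t - T) ^ 2) ^ (-r) :=
        Real.rpow_le_rpow_of_nonpos (by positivity) h2 (by linarith)
      have h4 : ((t - T) ^ 2 : ℝ) ^ (-r) = (t - T) ^ (-(2 * r)) := by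
        rw [show (-(2 * r) : ℝ) = 2 * (-r) by ring, Real.rpow_mul htT.le, Real.rpow_two]
      have h5 : (t - T) * (t - T) ^ (-(2 * r)) = (t - T) ^ (1 - 2 * r) := by
        rw [show (1 - 2 * r : ℝ) = -(2 * r) + 1 by ring, Real.rpow_add_one htT.ne']
        ring
      calc f t ≤ (t - T) * ((t - T) ^ 2) ^ (-r) := by
            exact mul_le_mul_of_nonneg_left (h4 ▸ h3.trans_eq h4) htT.le
        _ = (t - T) ^ (1 - 2 * r) := by rw [h4]; exact h5
  have hint : IntegrableOn F' (Ioi (0:ℝ)) := by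
    apply Integrable.add
    · exact (I1_integrableOn hT (by linarith : (-r : ℝ) ≤ -1)).const_mul _
    · exact (I1_integrableOn hT (by linarith : (-(r + 1) : ℝ) ≤ -1)).const_mul _
  have hFTC := integral_Ioi_of_hasDerivAt_of_tendsto' hderiv hint htend
  have hsplitint : ∫ t in Ioi (0:ℝ), F' t
      = (1 - 2 * r) * (∫ t in Ioi (0:ℝ), (1 + (t - T) ^ 2) ^ (-r))
        + 2 * r * (∫ t in Ioi (0:ℝ), (1 + (t - T) ^ 2) ^ (-(r + 1))) := by
    rw [hF'def]
    rw [integral_add ((I1_integrableOn hT (by linarith : (-r : ℝ) ≤ -1)).const_mul _)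
      ((I1_integrableOn hT (by linarith : (-(r + 1) : ℝ) ≤ -1)).const_mul _)]
    rw [integral_const_mul, integral_const_mul]
  have hf0 : f 0 = (-T) * (1 + T ^ 2) ^ (-r) := by
    simp only [hfdef]
    norm_num
  rw [hsplitint, hf0] at hFTC
  linarith [hFTC]

private lemma I1_step {T : ℝ} (hT : T < 0) {r s : ℝ} (hr : 1 ≤ r) (hs : s = r + 1) :
    (1 + T ^ 2) * ∫ t in Ioi (0:ℝ), (1 + (t - T) ^ 2) ^ (-s)
      ≤ ∫ t in Ioi (0:ℝ), (1 + (t - T) ^ 2) ^ (-r) := by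
  subst hs
  rw [← integral_const_mul]
  apply setIntegral_mono_on
    ((I1_integrableOn hT (by linarith : (-(r + 1) : ℝ) ≤ -1)).const_mul _)
    (I1_integrableOn hT (by linarith : (-r : ℝ) ≤ -1)) measurableSet_Ioi
  intro t ht
  have ht0 : (0:ℝ) < t := ht
  have hb : (0:ℝ) < 1 + (t - T) ^ 2 := I1_base_pos T t
  have hw : 1 + T ^ 2 ≤ 1 + (t - T) ^ 2 := by nlinarith [mul_pos ht0 (neg_pos.mpr hT)]
  calc (1 + T ^ 2) * (1 + (t - T) ^ 2) ^ (-(r + 1))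
      ≤ (1 + (t - T) ^ 2) * (1 + (t - T) ^ 2) ^ (-(r + 1)) :=
        mul_le_mul_of_nonneg_right hw (Real.rpow_nonneg hb.le _)
    _ = (1 + (t - T) ^ 2) ^ (-r) := by
        rw [show (-r : ℝ) = -(r + 1) + 1 by ring, Real.rpow_add_one hb.ne']
        ring

private lemma I1_key_poly (N w c₀ c₁ c₂ E : ℝ) (hN : 62 ≤ N) (hc₀ : 0 < c₀) (hc₁ : 0 < c₁)
    (hE : 0 ≤ E)
    (h1 : (N - 10) * c₂ = (N - 9) * c₁ + w * E)
    (h2 : E = (N - 8) * c₁ - (N - 7) * c₀)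
    (h3 : ((N - 6) * w - (N - 5)) * c₀ ≤ E) :
    8 * (N + 7) * (N - 7) * (c₀ * c₂) < 9 * (N + 3) * (N - 9) * c₁ ^ 2 := by
  have hG : 0 ≤ (E - ((N - 6) * w - (N - 5)) * c₀) * E :=
    mul_nonneg (by linarith) hE
  have hV : 0 < (N - 62) ^ 4 + 174 * (N - 62) ^ 3 + 10385 * (N - 62) ^ 2
      + 229040 * (N - 62) + 981516 := by
    have h62 : 0 ≤ N - 62 := by linarith
    positivity
  have main : (N - 6) * (N - 10) * (9 * (N + 3) * (N - 9) * c₁ ^ 2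
        - 8 * (N + 7) * (N - 7) * (c₀ * c₂))
      = 4 * (N + 7) * (2 * (N - 7) * c₀ - (N - 9) * c₁) ^ 2
        + ((N - 62) ^ 4 + 174 * (N - 62) ^ 3 + 10385 * (N - 62) ^ 2
            + 229040 * (N - 62) + 981516) * c₁ ^ 2
        + 8 * (N + 7) * (N - 7) * ((E - ((N - 6) * w - (N - 5)) * c₀) * E) := by
    linear_combination (-8 * (N + 7) * (N - 7) * (N - 6) * c₀) * h1
      + (-8 * (N + 7) * (N - 7) * (E + 2 * c₀ + (N - 8) * c₁)) * h2
  nlinarith [main, hG, hV, sq_nonneg (2 * (N - 7) * c₀ - (N - 9) * c₁),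
    mul_pos hc₁ hc₁, sq_nonneg c₁]

set_option maxHeartbeats 2000000 in
/-- For `T < 0`, `n ≥ 62` and the explicit choice of `a₀`, the
quantity under the square root is positive, and
`c₀a₀² − (2(n+3)/(n−7))c₁a₀ + ((n+3)(n+7)/((n−7)(n−9)))c₂ > 0`
(which is `I(1)` up to the positive factor `(n−1)(n+1)/(n−5)`). -/
theorem I_one_positive (T : ℝ) (hT : T < 0) (n : ℕ) (hn : 62 ≤ n)
    (c : ℕ → ℝ)
    (hc : ∀ m : ℕ, c m
      = ∫ t in Set.Ioi (0 : ℝ), (1 + (t - T) ^ 2) ^ ((5 + 2 * (m : ℝ) - (n : ℝ)) / 2))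
    (a₀ : ℝ)
    (ha₀ : a₀ = (((n : ℝ) + 3) * c 1 / (2 * ((n : ℝ) - 7) * c 0))
      * (3 + Real.sqrt (9 - 8 * (((n : ℝ) + 7) * ((n : ℝ) - 7)
          / (((n : ℝ) + 3) * ((n : ℝ) - 9))) * (c 0 * c 2 / c 1 ^ 2)))) :
    0 < 9 - 8 * (((n : ℝ) + 7) * ((n : ℝ) - 7) / (((n : ℝ) + 3) * ((n : ℝ) - 9)))
        * (c 0 * c 2 / c 1 ^ 2) ∧
    0 < c 0 * a₀ ^ 2 - (2 * ((n : ℝ) + 3) / ((n : ℝ) - 7)) * c 1 * a₀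
        + (((n : ℝ) + 3) * ((n : ℝ) + 7) / (((n : ℝ) - 7) * ((n : ℝ) - 9))) * c 2 := by
  have hN : (62:ℝ) ≤ (n:ℝ) := by exact_mod_cast hn
  set N : ℝ := (n : ℝ) with hNdef
  -- rewrite the c's
  have hc0 : c 0 = ∫ t in Ioi (0:ℝ), (1 + (t - T) ^ 2) ^ (-((N - 5) / 2)) := by
    rw [hc 0]
    norm_num
    simp only [show (5 - N) / 2 = -((N - 5) / 2) by ring]
  have hc1 : c 1 = ∫ t in Ioi (0:ℝ), (1 + (t - T) ^ 2) ^ (-((N - 7) / 2)) := by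
    rw [hc 1]
    norm_num
    simp only [show (7 - N) / 2 = -((N - 7) / 2) by ring]
  have hc2 : c 2 = ∫ t in Ioi (0:ℝ), (1 + (t - T) ^ 2) ^ (-((N - 9) / 2)) := by
    rw [hc 2]
    norm_num
    simp only [show (9 - N) / 2 = -((N - 9) / 2) by ring]
  have hw0 : (0:ℝ) < 1 + T ^ 2 := by positivity
  have hwne : (1 + T ^ 2 : ℝ) ≠ 0 := hw0.ne'
  have hTpos : 0 < -T := by linarith
  have hc0pos : 0 < c 0 := by rw [hc0]; exact I1_integral_pos hT (by linarith)
  have hc1pos : 0 < c 1 := by rw [hc1]; exact I1_integral_pos hT (by linarith)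
  have hc2pos : 0 < c 2 := by rw [hc2]; exact I1_integral_pos hT (by linarith)
  have e1 := I1_ibp hT (r := (N - 9) / 2) (s := (N - 7) / 2) (by linarith) (by ring)
  have e2 := I1_ibp hT (r := (N - 7) / 2) (s := (N - 5) / 2) (by linarith) (by ring)
  have e3 := I1_ibp hT (r := (N - 5) / 2) (s := (N - 3) / 2) (by linarith) (by ring)
  have d3 := I1_step hT (r := (N - 5) / 2) (s := (N - 3) / 2) (by linarith) (by ring)
  rw [← hc2, ← hc1] at e1
  rw [← hc1, ← hc0] at e2
  rw [← hc0] at e3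
  rw [← hc0] at d3
  set w : ℝ := 1 + T ^ 2 with hwdef
  set cm : ℝ := ∫ t in Ioi (0:ℝ), (1 + (t - T) ^ 2) ^ (-((N - 3) / 2)) with hcmdef
  have hw2 : w ^ (-((N - 9) / 2)) = w * w ^ (-((N - 7) / 2)) := by
    rw [show (-((N - 9) / 2) : ℝ) = -((N - 7) / 2) + 1 by ring, Real.rpow_add_one hwne]
    ring
  have hw3 : w ^ (-((N - 7) / 2)) = w * w ^ (-((N - 5) / 2)) := by
    rw [show (-((N - 7) / 2) : ℝ) = -((N - 5) / 2) + 1 by ring, Real.rpow_add_one hwne]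
    ring
  set E : ℝ := (-T) * w ^ (-((N - 7) / 2)) with hEdef
  have hEpos : 0 < E := mul_pos hTpos (Real.rpow_pos_of_pos hw0 _)
  have f1 : (N - 10) * c 2 = (N - 9) * c 1 + w * E := by
    rw [hEdef]; linear_combination e1 + (-T) * hw2
  have f2 : E = (N - 8) * c 1 - (N - 7) * c 0 := by
    rw [hEdef]; linear_combination -e2
  have h4 : (-T) * w ^ (-((N - 5) / 2)) = (N - 6) * c 0 - (N - 5) * cm := by
    linear_combination -e3
  have h5 : E = w * ((N - 6) * c 0 - (N - 5) * cm) := by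
    rw [hEdef]; linear_combination (-T) * hw3 + w * h4
  have f3 : ((N - 6) * w - (N - 5)) * c 0 ≤ E := by
    have h6 : 0 ≤ (N - 5) * (c 0 - w * cm) :=
      mul_nonneg (by linarith) (by linarith [d3])
    nlinarith [h5, h6]
  have Spos := I1_key_poly N w (c 0) (c 1) (c 2) E hN hc0pos hc1pos hEpos.le f1 f2 f3
  have hN9 : (0:ℝ) < N - 9 := by linarith
  have hN7 : (0:ℝ) < N - 7 := by linarith
  have hN3 : (0:ℝ) < N + 3 := by linarith
  have hc0ne : c 0 ≠ 0 := hc0pos.ne'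
  have hc1ne : c 1 ≠ 0 := hc1pos.ne'
  have hN9ne : (N - 9) ≠ 0 := hN9.ne'
  have hN7ne : (N - 7) ≠ 0 := hN7.ne'
  have hN3ne : (N + 3) ≠ 0 := hN3.ne'
  have hden : (0:ℝ) < (N + 3) * (N - 9) * c 1 ^ 2 :=
    mul_pos (mul_pos hN3 hN9) (pow_pos hc1pos 2)
  have hgoal1 : 0 < 9 - 8 * ((N + 7) * (N - 7) / ((N + 3) * (N - 9)))
      * (c 0 * c 2 / c 1 ^ 2) := by
    have heq : 9 - 8 * ((N + 7) * (N - 7) / ((N + 3) * (N - 9))) * (c 0 * c 2 / c 1 ^ 2)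
        = (9 * (N + 3) * (N - 9) * c 1 ^ 2 - 8 * (N + 7) * (N - 7) * (c 0 * c 2))
          / ((N + 3) * (N - 9) * c 1 ^ 2) := by
      field_simp
    rw [heq]
    exact div_pos (by linarith [Spos]) hden
  refine ⟨hgoal1, ?_⟩
  set s : ℝ := Real.sqrt (9 - 8 * ((N + 7) * (N - 7) / ((N + 3) * (N - 9)))
      * (c 0 * c 2 / c 1 ^ 2)) with hsdef
  have hs0 : 0 ≤ s := Real.sqrt_nonneg _
  have hs2 : s ^ 2 = 9 - 8 * ((N + 7) * (N - 7) / ((N + 3) * (N - 9)))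
      * (c 0 * c 2 / c 1 ^ 2) := Real.sq_sqrt hgoal1.le
  field_simp at hs2
  have ha' : 2 * (N - 7) * c 0 * a₀ = (N + 3) * c 1 * (3 + s) := by
    rw [ha₀]
    field_simp
  have hMQ : (8 * c 0 * (N - 7) ^ 2 * (N + 3) * (N - 9))
        * (c 0 * a₀ ^ 2 - (2 * (N + 3) / (N - 7)) * c 1 * a₀
          + ((N + 3) * (N + 7) / ((N - 7) * (N - 9))) * c 2)
      = (N + 3) ^ 3 * (N - 9) * c 1 ^ 2 * (s + 1) * (s + 3) := by
    field_simp
    linear_combination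
      (2 * (N - 9) * (2 * (N - 7) * c 0 * a₀ + (N + 3) * c 1 * (3 + s))
        - 8 * (N + 3) * (N - 9) * c 1) * ha'
      + (N + 3) * hs2
  have hMpos : (0:ℝ) < 8 * c 0 * (N - 7) ^ 2 * (N + 3) * (N - 9) := by
    have := pow_pos hN7 2
    positivity
  have hRHSpos : 0 < (N + 3) ^ 3 * (N - 9) * c 1 ^ 2 * (s + 1) * (s + 3) := by
    have h1 : (0:ℝ) < (N + 3) ^ 3 := pow_pos hN3 3
    have h2 : (0:ℝ) < s + 1 := by linarith
    have h3 : (0:ℝ) < s + 3 := by linarith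
    exact mul_pos (mul_pos (mul_pos (mul_pos h1 hN9) (pow_pos hc1pos 2)) h2) h3
  have hQ : c 0 * a₀ ^ 2 - (2 * (N + 3) / (N - 7)) * c 1 * a₀
        + ((N + 3) * (N + 7) / ((N - 7) * (N - 9))) * c 2
      = ((N + 3) ^ 3 * (N - 9) * c 1 ^ 2 * (s + 1) * (s + 3))
        / (8 * c 0 * (N - 7) ^ 2 * (N + 3) * (N - 9)) := by
    rw [eq_div_iff hMpos.ne']
    linear_combination hMQ
  rw [hQ]
  exact div_pos hRHSpos hMpos
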